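/- Let n ≥ 1 and let H be a closed subgroup of the torus Tⁿ = (Circle)ⁿ, acting on the unit sphere S^{2n-1} of ℂⁿ by coordinatewise multiplication. If the action of H on S^{2n-1} is free, then either H is a finite cyclic group, or H is topologically isomorphic to the circle group; in the latter case H = {(t^{ε₁}, …, t^{εₙ}) : t ∈ Circle} for some choice of signs εᵢ ∈ {1, −1}. -/

import Mathlib

open Real

private lemma Circle.coe_zpow' (z : Circle) (m : ℤ) : ((z ^ m : Circle) : ℂ) = (z : ℂ) ^ m := by
  cases m with
  | ofNat k =>
    rw [Int.ofNat_eq_coe, zpow_natCast, zpow_natCast]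
    exact map_pow Circle.coeHom z k
  | negSucc k =>
    rw [zpow_negSucc, zpow_negSucc, Circle.coe_inv]
    congr 1

private lemma circle_exp_zpow (a : ℝ) (m : ℤ) :
    Circle.exp ((m : ℝ) * a) = Circle.exp a ^ m := by
  apply Subtype.ext
  rw [Circle.coe_zpow', Circle.coe_exp, Circle.coe_exp, ← Complex.exp_int_mul]
  congr 1
  push_cast
  ring

/-- A closed subgroup of the circle is finite or everything. -/
private lemma circle_closed_subgroup (K : Subgroup Circle)
    (hc : IsClosed (K : Set Circle)) : (K : Set Circle).Finite ∨ K = ⊤ := by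
  let S : AddSubgroup ℝ :=
    { carrier := Circle.exp ⁻¹' (K : Set Circle)
      zero_mem' := by
        simp only [Set.mem_preimage, Circle.exp_zero, SetLike.mem_coe]
        exact K.one_mem
      add_mem' := by
        intro a b ha hb
        simp only [Set.mem_preimage, Circle.exp_add, SetLike.mem_coe] at *
        exact K.mul_mem ha hb
      neg_mem' := by
        intro a ha
        simp only [Set.mem_preimage, Circle.exp_neg, SetLike.mem_coe] at *
        exact K.inv_mem ha }
  have hmemS : ∀ x : ℝ, x ∈ S ↔ Circle.exp x ∈ K := fun _ => Iff.rfl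
  have hSclosed : IsClosed (S : Set ℝ) := hc.preimage Circle.exp.continuous
  rcases S.dense_or_cyclic with hd | ⟨a, ha⟩
  · right
    have huniv : (S : Set ℝ) = Set.univ := by
      rw [← hSclosed.closure_eq, hd.closure_eq]
    rw [Subgroup.eq_top_iff']
    intro z
    have : Complex.arg (z : ℂ) ∈ S := by rw [← SetLike.mem_coe, huniv]; trivial
    rw [hmemS] at this
    rwa [Circle.exp_arg z] at this
  · left
    have h2pi : (2 * π : ℝ) ∈ S := by
      rw [hmemS]
      simp only [Circle.exp_two_pi]
      exact K.one_mem
    rw [ha, AddSubgroup.mem_closure_singleton] at h2pi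
    obtain ⟨m, hm⟩ := h2pi
    have hm0 : m ≠ 0 := by
      rintro rfl
      simp only [zero_smul] at hm
      have := Real.two_pi_pos
      linarith
    set g : Circle := Circle.exp a with hg
    have hgm : g ^ m = 1 := by
      rw [hg, ← circle_exp_zpow, show (m : ℝ) * a = 2 * π by rw [← hm, zsmul_eq_mul],
        Circle.exp_two_pi]
    have hfin : IsOfFinOrder g := by
      rw [isOfFinOrder_iff_pow_eq_one]
      refine ⟨m.natAbs, Int.natAbs_pos.2 hm0, ?_⟩
      have habs : g ^ (m.natAbs : ℤ) = 1 := by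
        rcases Int.natAbs_eq m with h | h
        · rw [← h, hgm]
        · rw [show ((m.natAbs : ℤ)) = -m by omega, zpow_neg, hgm, inv_one]
      rwa [zpow_natCast] at habs
    refine (finite_zpowers.2 hfin).subset ?_
    intro z hz
    have hargz : Complex.arg (z : ℂ) ∈ S := by
      rw [hmemS, Circle.exp_arg z]; exact hz
    rw [ha, AddSubgroup.mem_closure_singleton] at hargz
    obtain ⟨k, hk⟩ := hargz
    have : z = g ^ k := by
      rw [hg, ← circle_exp_zpow,
        show (k : ℝ) * a = Complex.arg (z : ℂ) by rw [← hk, zsmul_eq_mul]]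
      exact (Circle.exp_arg z).symm
    rw [this]
    exact zpow_mem (Subgroup.mem_zpowers g) k

/-- A continuous character on `AddCircle T` is a Fourier monomial. -/
private lemma char_eq_fourier {T : ℝ} [hT : Fact (0 < T)] (h : AddCircle T → ℂ)
    (hcont : Continuous h) (hmul : ∀ x y, h (x + y) = h x * h y)
    (hnorm : ∀ x, ‖h x‖ = 1) :
    ∃ n : ℤ, ∀ x, h x = fourier n x := by
  by_contra hcon
  push_neg at hcon
  have hfmul : ∀ (m : ℤ) (x y : AddCircle T),
      (fourier m (x + y) : ℂ) = fourier m x * fourier m y := by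
    intro m x y
    rw [fourier_apply, fourier_apply, fourier_apply, smul_add, AddCircle.toCircle_add]
    push_cast
    ring
  have hcoeff : ∀ m : ℤ, fourierCoeff h m = 0 := by
    intro m
    obtain ⟨b, hb⟩ := hcon m
    have h3 : (fourier m b : ℂ) * fourier (-m) b = 1 := by
      rw [← fourier_add, add_neg_cancel]
      exact fourier_zero
    have hgchar : ∀ x y : AddCircle T,
        (fourier (-m) (x + y) : ℂ) * h (x + y) =
          (fourier (-m) x * h x) * (fourier (-m) y * h y) := by
      intro x y
      rw [hfmul, hmul]
      ring
    have hgb : (fourier (-m) b : ℂ) * h b ≠ 1 := by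
      intro h1
      apply hb
      calc h b = ((fourier m b : ℂ) * fourier (-m) b) * h b := by rw [h3, one_mul]
        _ = (fourier m b : ℂ) * (fourier (-m) b * h b) := by ring
        _ = fourier m b := by rw [h1, mul_one]
    have hI : ((fourier (-m) b : ℂ) * h b) * (∫ x : AddCircle T, fourier (-m) x * h x ∂AddCircle.haarAddCircle)
        = ∫ x : AddCircle T, fourier (-m) x * h x ∂AddCircle.haarAddCircle := by
      rw [← MeasureTheory.integral_const_mul]
      have : (fun x : AddCircle T => ((fourier (-m) b : ℂ) * h b) * (fourier (-m) x * h x))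
          = fun x : AddCircle T => (fourier (-m) (b + x) : ℂ) * h (b + x) := by
        funext x
        rw [hgchar]
      rw [this]
      exact MeasureTheory.integral_add_left_eq_self
        (fun x : AddCircle T => (fourier (-m) x : ℂ) * h x) b
    have hIzero : (∫ x : AddCircle T, fourier (-m) x * h x ∂AddCircle.haarAddCircle) = 0 := by
      by_contra hne
      apply hgb
      have := mul_right_cancel₀ hne (hI.trans (one_mul _).symm)
      exact this
    rw [fourierCoeff]
    simpa only [smul_eq_mul] using hIzero
  -- all Fourier coefficients vanish, so `h = 0`, contradicting `|h| = 1`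
  set F : C(AddCircle T, ℂ) := ⟨h, hcont⟩ with hF
  have hcoeffF : ∀ m : ℤ, fourierCoeff (⇑F) m = 0 := hcoeff
  have hsummable : Summable (fourierCoeff (⇑F)) := by
    have : fourierCoeff (⇑F) = fun _ => (0 : ℂ) := funext hcoeffF
    rw [this]
    exact summable_zero
  have hsum := hasSum_fourier_series_of_summable hsummable
  have h0 : (fun i : ℤ => fourierCoeff (⇑F) i • fourier (T := T) i)
      = fun _ => (0 : C(AddCircle T, ℂ)) := by
    funext i
    rw [hcoeffF, zero_smul]
  rw [h0] at hsum
  have hF0 : F = 0 := hsum.unique hasSum_zero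
  have : h 0 = 0 := by
    have := congrArg (fun G : C(AddCircle T, ℂ) => G 0) hF0
    simpa [hF] using this
  have h1 := hnorm 0
  rw [this] at h1
  simp at h1

/-- Every continuous monoid homomorphism of the circle is `t ↦ t ^ k`. -/
private lemma circle_monoidHom_zpow (f : Circle →* Circle) (hf : Continuous f) :
    ∃ k : ℤ, ∀ t : Circle, f t = t ^ k := by
  haveI : Fact (0 < 2 * π) := ⟨Real.two_pi_pos⟩
  set φ : AddCircle (2 * π) ≃ₜ Circle := AddCircle.homeomorphCircle'
  have hφ_mul : ∀ x y : AddCircle (2 * π), φ (x + y) = φ x * φ y := by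
    intro x y
    induction x using QuotientAddGroup.induction_on with
    | H r =>
    induction y using QuotientAddGroup.induction_on with
    | H s =>
    show φ ((↑(r + s) : AddCircle (2 * π))) = _
    rw [AddCircle.homeomorphCircle'_apply_mk, AddCircle.homeomorphCircle'_apply_mk,
      AddCircle.homeomorphCircle'_apply_mk, Circle.exp_add]
  set h : AddCircle (2 * π) → ℂ := fun x => ((f (φ x) : Circle) : ℂ) with hh
  have hcont : Continuous h := by
    exact continuous_induced_dom.comp (hf.comp φ.continuous)
  have hmul : ∀ x y, h (x + y) = h x * h y := by
    intro x y
    simp only [hh, hφ_mul, map_mul, Circle.coe_mul]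
  have hnorm : ∀ x, ‖h x‖ = 1 := fun x => Circle.norm_coe _
  obtain ⟨k, hk⟩ := char_eq_fourier h hcont hmul hnorm
  refine ⟨k, ?_⟩
  have key : ∀ r : ℝ, f (Circle.exp r) = Circle.exp r ^ k := by
    intro r
    have h1 := hk ((r : ℝ) : AddCircle (2 * π))
    have h2 : h ((r : ℝ) : AddCircle (2 * π)) = ((f (Circle.exp r) : Circle) : ℂ) := by
      simp only [hh]
      rw [AddCircle.homeomorphCircle'_apply_mk]
    have h3 : (fourier k ((r : ℝ) : AddCircle (2 * π)) : ℂ) = ((Circle.exp r ^ k : Circle) : ℂ) := by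
      rw [fourier_coe_apply, Circle.coe_zpow', Circle.coe_exp, ← Complex.exp_int_mul]
      congr 1
      have hπ : (π : ℂ) ≠ 0 := by
        exact_mod_cast Real.pi_ne_zero
      field_simp
      push_cast
      ring
    apply Subtype.ext
    rw [← h2, h1, h3]
  intro t
  have := key (Complex.arg (t : ℂ))
  rwa [Circle.exp_arg] at this

private lemma exp_ne_one_of_pi : Circle.exp π ≠ 1 := by
  intro hcontra
  rw [show (1 : Circle) = Circle.exp 0 from Circle.exp_zero.symm, Circle.exp_eq_exp] at hcontra
  obtain ⟨m, hm⟩ := hcontra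
  rw [zero_add] at hm
  have hπ : π ≠ 0 := Real.pi_ne_zero
  have h1 : (1 : ℝ) = 2 * m :=
    mul_left_cancel₀ hπ (by linear_combination hm)
  have h2 : (1 : ℤ) = 2 * m := by exact_mod_cast h1
  omega

theorem closed_subgroup_of_torus_acting_freely_on_sphere
    (n : ℕ) (hn : 1 ≤ n) (H : Subgroup (Fin n → Circle))
    (hclosed : IsClosed (H : Set (Fin n → Circle)))
    (hfree : ∀ z ∈ H,
      (∃ v : EuclideanSpace ℂ (Fin n), ‖v‖ = 1 ∧ ∀ i, (z i : ℂ) * v i = v i) → z = 1) :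
    (Finite H ∧ IsCyclic H) ∨
      ((∃ e : H ≃* Circle, Continuous e ∧ Continuous e.symm) ∧
        ∃ ε : Fin n → ℤ, (∀ i, ε i = 1 ∨ ε i = -1) ∧
          ∀ z : Fin n → Circle, z ∈ H ↔ ∃ t : Circle, ∀ i, z i = t ^ ε i) := by
  classical
  set i0 : Fin n := ⟨0, hn⟩ with hi0
  have hfree' : ∀ z ∈ H, ∀ i : Fin n, z i = 1 → z = 1 := by
    intro z hz i hi
    apply hfree z hz
    refine ⟨EuclideanSpace.single i (1 : ℂ), ?_, ?_⟩
    · rw [EuclideanSpace.norm_single]; simp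
    · intro j
      rcases eq_or_ne j i with rfl | hji
      · simp [EuclideanSpace.single_apply, hi]
      · rw [EuclideanSpace.single_apply, if_neg hji, mul_zero]
  set π' : Fin n → (H →* Circle) :=
    fun i => (Pi.evalMonoidHom (fun _ => Circle) i).comp H.subtype with hπ'
  have hinj : ∀ i, Function.Injective (π' i) := by
    intro i
    rw [injective_iff_map_eq_one]
    intro w hw
    exact Subtype.ext (hfree' w w.2 i hw)
  by_cases hfin : Finite H
  · left
    refine ⟨hfin, ?_⟩
    haveI := hfin
    exact isCyclic_of_subgroup_isDomain (Circle.coeHom.comp (π' i0))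
      (Subtype.coe_injective.comp (hinj i0))
  · right
    haveI : CompactSpace H := isCompact_iff_compactSpace.mp hclosed.isCompact
    have hcontπ : ∀ i, Continuous (π' i) :=
      fun i => (continuous_apply i).comp continuous_subtype_val
    have hsurj : ∀ i, Function.Surjective (π' i) := by
      intro i
      rw [← MonoidHom.range_eq_top]
      have hclrange : IsClosed ((π' i).range : Set Circle) := by
        rw [MonoidHom.coe_range]
        exact (isCompact_range (hcontπ i)).isClosed
      rcases circle_closed_subgroup (π' i).range hclrange with hfin' | htop
      · exfalso
        apply hfin
        rw [MonoidHom.coe_range] at hfin'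
        haveI : Finite (Set.range (π' i)) := hfin'.to_subtype
        exact Finite.of_injective
          (fun w : H => (⟨π' i w, Set.mem_range_self w⟩ : Set.range (π' i)))
          (fun a b hab => hinj i (Subtype.ext_iff.mp hab))
      · exact htop
    set e : ∀ i : Fin n, H ≃* Circle :=
      fun i => MulEquiv.ofBijective (π' i) ⟨hinj i, hsurj i⟩ with he
    have he_cont : ∀ i, Continuous (e i) := hcontπ
    have he_symm_cont : ∀ i, Continuous (e i).symm := by
      intro i
      have hcont' : Continuous ((e i).toEquiv : H → Circle) := hcontπ i
      let homeo := hcont'.homeoOfEquivCompactToT2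
      have hfun : ((e i).symm : Circle → H) = (homeo.symm : Circle → H) := by
        funext t
        apply hinj i
        show (e i) ((e i).symm t) = (e i) (homeo.symm t)
        calc (e i) ((e i).symm t) = t := (e i).apply_symm_apply t
          _ = homeo (homeo.symm t) := (homeo.apply_symm_apply t).symm
          _ = (e i) (homeo.symm t) := rfl
      rw [hfun]
      exact homeo.symm.continuous
    refine ⟨⟨e i0, he_cont i0, he_symm_cont i0⟩, ?_⟩
    have hfi : ∀ i, ∃ k : ℤ, ∀ t : Circle, π' i ((e i0).symm t) = t ^ k := by
      intro i
      obtain ⟨k, hk⟩ := circle_monoidHom_zpow ((π' i).comp (e i0).symm.toMonoidHom)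
        ((hcontπ i).comp (he_symm_cont i0))
      exact ⟨k, fun t => hk t⟩
    choose k hk using hfi
    have hkinj : ∀ i, Function.Injective fun t : Circle => t ^ k i := by
      intro i
      have hfn : (fun t : Circle => t ^ k i) = (π' i) ∘ ((e i0).symm) := by
        funext t
        exact (hk i t).symm
      rw [hfn]
      exact (hinj i).comp (e i0).symm.injective
    have hks : ∀ i, k i = 1 ∨ k i = -1 := by
      intro i
      by_cases hk0 : k i = 0
      · exfalso
        have h1 : Circle.exp π ^ k i = (1 : Circle) ^ k i := by rw [hk0]; simp
        exact exp_ne_one_of_pi (hkinj i h1)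
      · have hkR : ((k i : ℝ)) ≠ 0 := Int.cast_ne_zero.mpr hk0
        have hpow : (fun t : Circle => t ^ k i) (Circle.exp (2 * π / (k i : ℝ)))
            = (fun t : Circle => t ^ k i) 1 := by
          show Circle.exp (2 * π / (k i : ℝ)) ^ k i = (1 : Circle) ^ k i
          rw [one_zpow, ← circle_exp_zpow,
            show (k i : ℝ) * (2 * π / (k i : ℝ)) = 2 * π by field_simp]
          exact Circle.exp_two_pi
        have heq := hkinj i hpow
        rw [show (1 : Circle) = Circle.exp 0 from Circle.exp_zero.symm,
          Circle.exp_eq_exp] at heq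
        obtain ⟨m, hm⟩ := heq
        rw [zero_add] at hm
        have h2π : (2 * π : ℝ) ≠ 0 := Real.two_pi_pos.ne'
        have h1 : (1 : ℝ) = m * k i := by
          have hstep : 2 * π / (k i : ℝ) * (k i : ℝ) = ((m : ℝ) * (2 * π)) * k i := by
            rw [hm]
          rw [div_mul_cancel₀ _ hkR] at hstep
          exact mul_left_cancel₀ h2π (by linear_combination hstep)
        have h2 : (1 : ℤ) = m * k i := by exact_mod_cast h1
        have hunit : IsUnit (k i) :=
          IsUnit.of_mul_eq_one m (by rw [mul_comm]; exact h2.symm)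
        exact Int.isUnit_iff.mp hunit
    refine ⟨k, hks, ?_⟩
    intro z
    constructor
    · intro hz
      refine ⟨z i0, fun i => ?_⟩
      set w : H := ⟨z, hz⟩ with hwdef
      have hw : (e i0).symm (z i0) = w := by
        apply (e i0).injective
        rw [(e i0).apply_symm_apply]
        rfl
      have hzi := hk i (z i0)
      rw [hw] at hzi
      exact hzi
    · rintro ⟨t, ht⟩
      have hzeq : z = (((e i0).symm t : H) : Fin n → Circle) := by
        funext i
        rw [ht i]
        exact (hk i t).symm
      rw [hzeq]
      exact ((e i0).symm t).2
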